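/- Let p > q > 0 be real numbers, f(s) = s^p − s^q and F(s) = s^{p+1}/(p+1) − s^{q+1}/(q+1). Then for every s > 1 (where f(s) > 0): if p ≥ q + 1, the derivative at s of the function s ↦ F(s)/f(s) is ≥ 1/(p+1); and if q < p < q + 1, this derivative is ≥ (1/(p+1))·(1 − (q+1−p)²/(4(q+1))). -/

import Mathlib

/-- For `p > q > 0`, `f(s) = s^p - s^q`, `F(s) = s^{p+1}/(p+1) - s^{q+1}/(q+1)` and `s > 1`:
if `p ≥ q + 1` the derivative of `s ↦ F(s)/f(s)` at `s` is `≥ 1/(p+1)`, while if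
`q < p < q + 1` it is `≥ (1/(p+1))(1 - (q+1-p)²/(4(q+1)))`. -/
theorem deriv_F_div_f_lower_bound (p q : ℝ) (hq : 0 < q) (hqp : q < p) :
    ∀ s : ℝ, 1 < s →
      (q + 1 ≤ p → ∃ d : ℝ, 1 / (p + 1) ≤ d ∧
        HasDerivAt
          (fun t : ℝ => (t ^ (p + 1) / (p + 1) - t ^ (q + 1) / (q + 1)) / (t ^ p - t ^ q))
          d s) ∧
      (p < q + 1 → ∃ d : ℝ, 1 / (p + 1) * (1 - (q + 1 - p) ^ 2 / (4 * (q + 1))) ≤ d ∧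
        HasDerivAt
          (fun t : ℝ => (t ^ (p + 1) / (p + 1) - t ^ (q + 1) / (q + 1)) / (t ^ p - t ^ q))
          d s) := by
  intro s hs
  have hs0 : (0:ℝ) < s := lt_trans one_pos hs
  have hsne : s ≠ 0 := hs0.ne'
  have hp1 : (0:ℝ) < p + 1 := by linarith
  have hq1 : (0:ℝ) < q + 1 := by linarith
  have hBpos : (0:ℝ) < s ^ q := Real.rpow_pos_of_pos hs0 q
  have hApos : (0:ℝ) < s ^ p := Real.rpow_pos_of_pos hs0 p
  have hBA : s ^ q < s ^ p := (Real.rpow_lt_rpow_left_iff hs).mpr hqp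
  have hfpos : (0:ℝ) < s ^ p - s ^ q := sub_pos.mpr hBA
  have hfne : s ^ p - s ^ q ≠ 0 := hfpos.ne'
  -- derivatives
  have h1 : HasDerivAt (fun t : ℝ => t ^ (p+1)) ((p+1) * s ^ p) s := by
    simpa using Real.hasDerivAt_rpow_const (p := p+1) (Or.inl hsne)
  have h2 : HasDerivAt (fun t : ℝ => t ^ (q+1)) ((q+1) * s ^ q) s := by
    simpa using Real.hasDerivAt_rpow_const (p := q+1) (Or.inl hsne)
  have h3 : HasDerivAt (fun t : ℝ => t ^ p) (p * s ^ (p-1)) s :=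
    Real.hasDerivAt_rpow_const (Or.inl hsne)
  have h4 : HasDerivAt (fun t : ℝ => t ^ q) (q * s ^ (q-1)) s :=
    Real.hasDerivAt_rpow_const (Or.inl hsne)
  have hF : HasDerivAt (fun t : ℝ => t ^ (p+1)/(p+1) - t ^ (q+1)/(q+1)) (s ^ p - s ^ q) s := by
    have h := (h1.div_const (p+1)).sub (h2.div_const (q+1))
    have e1 : (p+1) * s ^ p / (p+1) = s ^ p := by field_simp
    have e2 : (q+1) * s ^ q / (q+1) = s ^ q := by field_simp
    rwa [e1, e2] at h
  have hf : HasDerivAt (fun t : ℝ => t ^ p - t ^ q) (p * s ^ (p-1) - q * s ^ (q-1)) s :=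
    h3.sub h4
  set D : ℝ := ((s^p - s^q)^2*(p+1)*(q+1) - (s^p*(q+1) - s^q*(p+1))*(p*s^p - q*s^q)) /
      ((s^p - s^q)^2*(p+1)*(q+1)) with hD
  have hd : HasDerivAt
      (fun t : ℝ => (t ^ (p + 1) / (p + 1) - t ^ (q + 1) / (q + 1)) / (t ^ p - t ^ q)) D s := by
    have h := hF.div hf hfne
    refine h.congr_deriv (Eq.symm ?_)
    have ea : s ^ (p+1) = s ^ p * s := Real.rpow_add_one hsne p
    have eb : s ^ (q+1) = s ^ q * s := Real.rpow_add_one hsne q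
    have ec : s ^ (p-1) = s ^ p / s := Real.rpow_sub_one hsne p
    have ed : s ^ (q-1) = s ^ q / s := Real.rpow_sub_one hsne q
    show D = _
    rw [hD]
    simp only [ea, eb, ec, ed]
    field_simp
  constructor
  · intro hple
    refine ⟨D, ?_, hd⟩
    have key : D - 1/(p+1) =
        ((p-q)*((p-q-1)*(s^p*s^q) + (s^q)^2)) / ((s^p-s^q)^2*(p+1)*(q+1)) := by
      rw [hD]
      field_simp
      ring
    have h5 : 0 ≤ ((p-q)*((p-q-1)*(s^p*s^q) + (s^q)^2)) / ((s^p-s^q)^2*(p+1)*(q+1)) := by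
      apply div_nonneg
      · apply mul_nonneg (by linarith)
        have : (0:ℝ) ≤ (p-q-1)*(s^p*s^q) :=
          mul_nonneg (by linarith) (by positivity)
        nlinarith [sq_nonneg (s^q)]
      · positivity
    linarith
  · intro hlt
    refine ⟨D, ?_, hd⟩
    have key : D - 1/(p+1)*(1 - (q+1-p)^2/(4*(q+1))) =
        ((q+1-p)*s^p - (1+p-q)*s^q)^2 / (4*((s^p-s^q)^2*(p+1)*(q+1))) := by
      rw [hD]
      field_simp
      ring
    have h5 : 0 ≤ ((q+1-p)*s^p - (1+p-q)*s^q)^2 / (4*((s^p-s^q)^2*(p+1)*(q+1))) := by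
      positivity
    linarith
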